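/- A special form of Freedman's inequality: let (X_t) be a real-valued martingale difference sequence adapted to filtration (F_t) with |X_t| ≤ R a.s. Then for any α ∈ (0, 1/R] and T, with probability at least 1−δ, Σ_{t=1}^T X_t ≤ α Σ_{t=1}^T E[X_t² | F_t] + log(1/δ)/α. -/

import Mathlib

open MeasureTheory

private lemma exp_le_quad {x : ℝ} (hx : |x| ≤ 1) : Real.exp x ≤ 1 + x + x ^ 2 := by
  have h := Real.exp_bound hx (n := 2) (by norm_num)
  have hsum : ∑ m ∈ Finset.range 2, x ^ m / m.factorial = 1 + x := by
    simp [Finset.sum_range_succ]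
  rw [hsum] at h
  have h2 := (abs_le.mp h).2
  rw [sq_abs] at h2
  norm_num at h2
  nlinarith [sq_nonneg x]

/-- A special form of Freedman's inequality: if `(X_t)` is a martingale
difference sequence with `|X_t| ≤ R` a.s., then for any `α ∈ (0, 1/R]` and `T`,
with probability at least `1 − δ`,
`Σ_{t<T} X_t ≤ α Σ_{t<T} E[X_t² | F_t] + log(1/δ)/α`. -/
theorem freedman_special_form {Ω : Type*} {m0 : MeasurableSpace Ω}
    (P : Measure Ω) [IsProbabilityMeasure P]
    (ℱ : Filtration ℕ m0) (X : ℕ → Ω → ℝ)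
    (R : ℝ) (hR : 0 < R)
    (hadapted : ∀ t, StronglyMeasurable[ℱ (t + 1)] (X t))
    (hmds : ∀ t, P[X t | ℱ t] =ᵐ[P] 0)
    (hbdd : ∀ t, ∀ᵐ ω ∂P, |X t ω| ≤ R)
    (α : ℝ) (hα0 : 0 < α) (hα1 : α ≤ 1 / R)
    (T : ℕ) (δ : ℝ) (hδ0 : 0 < δ) (hδ1 : δ < 1) :
    P {ω | ∑ t ∈ Finset.range T, X t ω
        ≤ α * ∑ t ∈ Finset.range T, (P[fun ω' => (X t ω') ^ 2 | ℱ t]) ω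
          + Real.log (1 / δ) / α}
      ≥ ENNReal.ofReal (1 - δ) := by
  have hαR : α * R ≤ 1 := by
    rw [le_div_iff₀ hR] at hα1; exact hα1
  set V : ℕ → Ω → ℝ := fun t => P[fun ω' => (X t ω') ^ 2 | ℱ t] with hV
  set S : ℕ → Ω → ℝ := fun n ω => ∑ t ∈ Finset.range n, X t ω with hS
  set A : ℕ → Ω → ℝ := fun n ω =>
    Real.exp (α * S n ω - α ^ 2 * ∑ t ∈ Finset.range n, V t ω) with hA
  have Xsm : ∀ t, StronglyMeasurable (X t) := fun t => (hadapted t).mono (ℱ.le _)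
  have Xint : ∀ t, Integrable (X t) P := fun t =>
    (integrable_const R).mono' (Xsm t).aestronglyMeasurable (hbdd t)
  have hX2int : ∀ t, Integrable (fun ω => (X t ω) ^ 2) P := by
    intro t
    refine (integrable_const (R ^ 2)).mono' ((Xsm t).pow 2).aestronglyMeasurable ?_
    filter_upwards [hbdd t] with ω h
    calc |X t ω ^ 2| = |X t ω| ^ 2 := by rw [abs_pow]
    _ ≤ R ^ 2 := pow_le_pow_left₀ (abs_nonneg _) h 2
  have hVsm : ∀ t, StronglyMeasurable[ℱ t] (V t) := fun t => stronglyMeasurable_condExp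
  have hVnn : ∀ t, 0 ≤ᵐ[P] V t := fun t =>
    condExp_nonneg (ae_of_all _ fun ω => sq_nonneg _)
  have hballV : ∀ᵐ ω ∂P, ∀ t, 0 ≤ V t ω := ae_all_iff.mpr hVnn
  have hballX : ∀ᵐ ω ∂P, ∀ t, |X t ω| ≤ R := ae_all_iff.mpr hbdd
  -- measurability of A n
  have hSsm : ∀ n, StronglyMeasurable[ℱ n] (S n) := by
    intro n
    exact Finset.stronglyMeasurable_fun_sum _ fun t ht =>
      (hadapted t).mono (ℱ.mono (Finset.mem_range.mp ht))
  have hAsm : ∀ n, StronglyMeasurable[ℱ n] (A n) := by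
    intro n
    refine Real.continuous_exp.comp_stronglyMeasurable ?_
    refine ((hSsm n).const_mul α).sub (StronglyMeasurable.const_mul ?_ _)
    exact Finset.stronglyMeasurable_fun_sum _ fun t ht =>
      (hVsm t).mono (ℱ.mono (Finset.mem_range.mp ht).le)
  have hAint : ∀ n, Integrable (A n) P := by
    intro n
    refine (integrable_const (Real.exp (α * (n * R)))).mono'
      ((hAsm n).mono (ℱ.le n)).aestronglyMeasurable ?_
    filter_upwards [hballV, hballX] with ω hv hx
    rw [Real.norm_eq_abs, abs_of_pos (Real.exp_pos _), Real.exp_le_exp]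
    have h1 : S n ω ≤ n * R := by
      calc S n ω ≤ ∑ t ∈ Finset.range n, R :=
        Finset.sum_le_sum fun t _ => (abs_le.mp (hx t)).2
      _ = n * R := by simp [mul_comm]
    have h2 : 0 ≤ α ^ 2 * ∑ t ∈ Finset.range n, V t ω := by
      refine mul_nonneg (sq_nonneg _) (Finset.sum_nonneg fun t _ => hv t)
    nlinarith [hα0.le]
  -- conditional mgf bound
  have hexpint : ∀ t, Integrable (fun ω => Real.exp (α * X t ω)) P := by
    intro t
    refine (integrable_const (Real.exp (α * R))).mono'
      (Real.continuous_exp.comp_stronglyMeasurable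
        ((Xsm t).const_mul α)).aestronglyMeasurable ?_
    filter_upwards [hbdd t] with ω h
    rw [Real.norm_eq_abs, abs_of_pos (Real.exp_pos _), Real.exp_le_exp]
    exact mul_le_mul_of_nonneg_left (abs_le.mp h).2 hα0.le
  have hmgf : ∀ t, (P[fun ω => Real.exp (α * X t ω) | ℱ t])
      ≤ᵐ[P] fun ω => Real.exp (α ^ 2 * V t ω) := by
    intro t
    have hq : (fun ω => Real.exp (α * X t ω))
        ≤ᵐ[P] fun ω => 1 + α * X t ω + α ^ 2 * (X t ω) ^ 2 := by
      filter_upwards [hbdd t] with ω h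
      have habs : |α * X t ω| ≤ 1 := by
        rw [abs_mul, abs_of_pos hα0]
        calc α * |X t ω| ≤ α * R := mul_le_mul_of_nonneg_left h hα0.le
        _ ≤ 1 := hαR
      calc Real.exp (α * X t ω) ≤ 1 + α * X t ω + (α * X t ω) ^ 2 := exp_le_quad habs
      _ = 1 + α * X t ω + α ^ 2 * (X t ω) ^ 2 := by ring
    have hqint : Integrable (fun ω => 1 + α * X t ω + α ^ 2 * (X t ω) ^ 2) P := by
      exact ((integrable_const 1).add ((Xint t).const_mul α)).add
        ((hX2int t).const_mul (α ^ 2))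
    have hmono := condExp_mono (hexpint t) hqint hq (m := ℱ t)
    have hce : P[fun ω => 1 + α * X t ω + α ^ 2 * (X t ω) ^ 2 | ℱ t]
        =ᵐ[P] fun ω => 1 + α ^ 2 * V t ω := by
      have h1 : (fun ω => 1 + α * X t ω + α ^ 2 * (X t ω) ^ 2)
          = ((fun _ => (1:ℝ)) + α • X t) + α ^ 2 • (fun ω => (X t ω) ^ 2) := by
        funext ω; simp [smul_eq_mul]
      rw [h1]
      refine (condExp_add ((integrable_const 1).add ((Xint t).smul α))
        ((hX2int t).smul (α ^ 2)) _).trans ?_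
      have h2 := condExp_add (m := ℱ t) (μ := P) (integrable_const (1:ℝ)) ((Xint t).smul α)
      have h3 := condExp_smul (m := ℱ t) (μ := P) α (X t)
      have h4 := condExp_smul (m := ℱ t) (μ := P) (α ^ 2) (fun ω => (X t ω) ^ 2)
      have ec := condExp_const (ℱ.le t) (1:ℝ) (μ := P)
      filter_upwards [h2, h3, h4, hmds t] with ω e2 e3 e4 e0
      simp only [Pi.add_apply, Pi.smul_apply, smul_eq_mul] at *
      rw [e2, e3, e4, congrFun ec ω, e0]
      simp [hV]
    filter_upwards [hmono, hce, hVnn t] with ω h1 h2 hv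
    calc (P[fun ω => Real.exp (α * X t ω) | ℱ t]) ω
        ≤ (P[fun ω => 1 + α * X t ω + α ^ 2 * (X t ω) ^ 2 | ℱ t]) ω := h1
    _ = 1 + α ^ 2 * V t ω := h2
    _ ≤ Real.exp (α ^ 2 * V t ω) := by
        have := Real.add_one_le_exp (α ^ 2 * V t ω); linarith
  -- the supermartingale bound : ∫ A n ≤ 1
  have hmain : ∀ n, ∫ ω, A n ω ∂P ≤ 1 := by
    intro n
    induction n with
    | zero => simp [hA, hS]
    | succ n ih =>
      set G : Ω → ℝ := fun ω =>
        Real.exp (α * S n ω - α ^ 2 * ∑ t ∈ Finset.range (n + 1), V t ω) with hG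
      have hGsm : StronglyMeasurable[ℱ n] G := by
        refine Real.continuous_exp.comp_stronglyMeasurable ?_
        refine ((hSsm n).const_mul α).sub (StronglyMeasurable.const_mul ?_ _)
        exact Finset.stronglyMeasurable_fun_sum _ fun t ht =>
          (hVsm t).mono (ℱ.mono (Nat.lt_succ_iff.mp (Finset.mem_range.mp ht)))
      have hGA : (fun ω => G ω * Real.exp (α ^ 2 * V n ω)) = A n := by
        funext ω
        rw [hG, hA, ← Real.exp_add]
        congr 1
        rw [Finset.sum_range_succ]; ring
      have hAeq : A (n + 1) = G * fun ω => Real.exp (α * X n ω) := by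
        funext ω
        simp only [hA, hG, Pi.mul_apply, ← Real.exp_add]
        congr 1
        simp only [hS]
        rw [Finset.sum_range_succ]; ring
      have hint1 : Integrable (G * fun ω => Real.exp (α * X n ω)) P := by
        rw [← hAeq]; exact hAint (n + 1)
      have hpull := condExp_mul_of_stronglyMeasurable_left hGsm hint1 (hexpint n)
      have hcondint : Integrable (G * P[fun ω => Real.exp (α * X n ω) | ℱ n]) P :=
        integrable_condExp.congr hpull
      calc ∫ ω, A (n + 1) ω ∂P
          = ∫ ω, (G * fun ω => Real.exp (α * X n ω)) ω ∂P := by rw [hAeq]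
      _ = ∫ ω, (P[G * fun ω => Real.exp (α * X n ω) | ℱ n]) ω ∂P :=
          (integral_condExp (ℱ.le n)).symm
      _ = ∫ ω, (G * P[fun ω => Real.exp (α * X n ω) | ℱ n]) ω ∂P :=
          integral_congr_ae hpull
      _ ≤ ∫ ω, G ω * Real.exp (α ^ 2 * V n ω) ∂P := by
          refine integral_mono_ae hcondint (by rw [hGA]; exact hAint n) ?_
          filter_upwards [hmgf n] with ω h
          exact mul_le_mul_of_nonneg_left h (Real.exp_pos _).le
      _ = ∫ ω, A n ω ∂P := by rw [hGA]
      _ ≤ 1 := ih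
  -- Markov's inequality
  have hmar := mul_meas_ge_le_integral_of_nonneg
    (ae_of_all P fun ω => (Real.exp_pos _).le) (hAint T) (1 / δ)
  have hbadle : P {ω | 1 / δ ≤ A T ω} ≤ ENNReal.ofReal δ := by
    have hfin : P {ω | 1 / δ ≤ A T ω} ≠ ⊤ := measure_ne_top _ _
    have hx : (P {ω | 1 / δ ≤ A T ω}).toReal ≤ δ := by
      have h1 : 1 / δ * (P {ω | 1 / δ ≤ A T ω}).toReal ≤ 1 := le_trans hmar (hmain T)
      have h2 : (0:ℝ) < 1 / δ := by positivity
      nlinarith [ENNReal.toReal_nonneg (a := P {ω | 1 / δ ≤ A T ω}),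
        mul_one_div_cancel hδ0.ne']
    rw [← ENNReal.ofReal_toReal hfin]
    exact ENNReal.ofReal_le_ofReal hx
  -- the good event is the complement of the bad event
  set good : Set Ω := {ω | S T ω
      ≤ α * ∑ t ∈ Finset.range T, V t ω + Real.log (1 / δ) / α} with hgood
  have hgoodmeas : MeasurableSet good := by
    refine measurableSet_le ((hSsm T).mono (ℱ.le T)).measurable ?_
    refine Measurable.add_const (Measurable.const_mul ?_ α) _
    exact (Finset.stronglyMeasurable_fun_sum (M := ℝ) _ fun t ht =>
      (hVsm t).mono (ℱ.le t)).measurable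
  have hsub : goodᶜ ⊆ {ω | 1 / δ ≤ A T ω} := by
    intro ω hω
    simp only [hgood, Set.mem_compl_iff, Set.mem_setOf_eq, not_le] at hω
    simp only [Set.mem_setOf_eq, hA]
    have hlog : Real.log (1 / δ) ≤ α * S T ω - α ^ 2 * ∑ t ∈ Finset.range T, V t ω := by
      have := mul_lt_mul_of_pos_left hω hα0
      have hc : α * (Real.log (1 / δ) / α) = Real.log (1 / δ) := by
        field_simp
      nlinarith
    calc 1 / δ = Real.exp (Real.log (1 / δ)) := (Real.exp_log (by positivity)).symm
    _ ≤ _ := Real.exp_le_exp.mpr hlog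
  have hcomple : P goodᶜ ≤ ENNReal.ofReal δ := le_trans (measure_mono hsub) hbadle
  have hPgood : P good = 1 - P goodᶜ := by
    rw [measure_compl hgoodmeas (measure_ne_top _ _), measure_univ]
    rw [ENNReal.sub_sub_cancel ENNReal.one_ne_top (prob_le_one)]
  show ENNReal.ofReal (1 - δ) ≤ P good
  rw [hPgood]
  have h5 : ENNReal.ofReal (1 - δ) = 1 - ENNReal.ofReal δ := by
    rw [ENNReal.ofReal_sub _ hδ0.le, ENNReal.ofReal_one]
  rw [h5]
  exact tsub_le_tsub_left hcomple 1
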